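/- Let s, t ∈ (0, √2) be such that f^(k)(s) ≠ 0 and f^(k)(t) ≠ 0 for all k ≥ 0, and suppose that for every k ≥ 0 the points f^(k)(s) and f^(k)(t) belong to the same interval I_i (i.e., the unique index i ∈ ℤ with f^(k)(s) ∈ I_i equals the unique index with f^(k)(t) ∈ I_i). Then s = t; in other words, the itinerary determines the point uniquely. -/
import Mathlib


noncomputable section

/-- `β = √2 - 1`. -/
def β : ℝ := Real.sqrt 2 - 1

/-- `ω = √2 + 1`. -/
def ω : ℝ := Real.sqrt 2 + 1

/-- The break points `Δ_i`. -/
def Δ (i : ℤ) : ℝ :=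
  if i < 0 then β ^ i.natAbs
  else if i = 0 then β
  else Real.sqrt 2 - β ^ i.natAbs

/-- The intervals `I_i`. -/
def Iint (i : ℤ) : Set ℝ :=
  if i < 0 then Set.Ioc (Δ (i - 1)) (Δ i)
  else if i = 0 then Set.Ioo β 1
  else Set.Ico (Δ i) (Δ (i + 1))

/-- The defining formula of `f` on the interval `I_i`. -/
def fval (i : ℤ) (s : ℝ) : ℝ :=
  if i < 0 then ω ^ (i.natAbs + 1) * (Δ i - s)
  else if i = 0 then ω * (s - β)
  else ω ^ (i.natAbs + 1) * (s - Δ i)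

/-- `f` is the renormalization map: `f 0 = f √2 = 0` and on each interval `I_i`
    it is given by the corresponding affine formula. These conditions determine
    `f` uniquely on `[0, √2]`. -/
def IsLuroth (f : ℝ → ℝ) : Prop :=
  f 0 = 0 ∧ f (Real.sqrt 2) = 0 ∧ ∀ i : ℤ, ∀ s ∈ Iint i, f s = fval i s

/-- `ℚ(√2)` as a subset of `ℝ`. -/
def QSqrt2 : Set ℝ := {x | ∃ a b : ℚ, x = (a : ℝ) + (b : ℝ) * Real.sqrt 2}

/-- `ℤ[√2]` as a subset of `ℝ`. -/
def ZSqrt2 : Set ℝ := {x | ∃ m n : ℤ, x = (m : ℝ) + (n : ℝ) * Real.sqrt 2}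

/-- `M_d = {s ∈ [0,√2] : d·s ∈ ℤ[√2]}`. -/
def Mset (d : ℤ) : Set ℝ :=
  {s | s ∈ Set.Icc 0 (Real.sqrt 2) ∧ (d : ℝ) * s ∈ ZSqrt2}

lemma sqrt2_lt_two : Real.sqrt 2 < 2 := by
  nlinarith [Real.sq_sqrt (by norm_num : (2:ℝ) ≥ 0), Real.sqrt_nonneg 2]

lemma one_lt_sqrt2 : 1 < Real.sqrt 2 := by
  nlinarith [Real.sq_sqrt (by norm_num : (2:ℝ) ≥ 0), Real.sqrt_nonneg 2]

lemma beta_pos : 0 < β := by unfold β; linarith [one_lt_sqrt2]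
lemma beta_lt_one : β < 1 := by unfold β; linarith [sqrt2_lt_two]
lemma omega_ge_two : 2 ≤ ω := by unfold ω; linarith [one_lt_sqrt2]
lemma omega_pos : (0:ℝ) < ω := by linarith [omega_ge_two]
lemma beta_omega : β * ω = 1 := by
  unfold β ω; nlinarith [Real.sq_sqrt (by norm_num : (2:ℝ) ≥ 0)]

lemma omega_pow_ge (n : ℕ) : 2 ≤ ω ^ (n + 1) := by
  calc (2:ℝ) ≤ ω := omega_ge_two
  _ ≤ ω ^ (n+1) := le_self_pow₀ (by linarith [omega_ge_two]) (Nat.succ_ne_zero n)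

lemma omega_pow_pos (n : ℕ) : (0:ℝ) < ω ^ n := pow_pos omega_pos n

lemma omega_pow_beta (n : ℕ) : ω ^ (n + 1) * β ^ n = ω := by
  have : (ω * β) ^ n = 1 := by rw [mul_comm, beta_omega, one_pow]
  calc ω ^ (n+1) * β ^ n = ω * ((ω * β) ^ n) := by ring
  _ = ω := by rw [this, mul_one]

lemma omega_pow_beta' (n : ℕ) : ω ^ n * β ^ n = 1 := by
  rw [← mul_pow, mul_comm, beta_omega, one_pow]

/-- expansion -/
lemma fval_expand (i : ℤ) (s t : ℝ) : 2 * |s - t| ≤ |fval i s - fval i t| := by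
  unfold fval
  split_ifs with h1 h2
  · have he : ω ^ (i.natAbs + 1) * (Δ i - s) - ω ^ (i.natAbs + 1) * (Δ i - t)
        = ω ^ (i.natAbs + 1) * (t - s) := by ring
    rw [he, abs_mul, abs_of_nonneg (omega_pow_pos (i.natAbs+1)).le, abs_sub_comm t s]
    nlinarith [abs_nonneg (s - t), omega_pow_ge i.natAbs]
  · have he : ω * (s - β) - ω * (t - β) = ω * (s - t) := by ring
    rw [he, abs_mul, abs_of_nonneg omega_pos.le]
    nlinarith [abs_nonneg (s - t), omega_ge_two]
  · have he : ω ^ (i.natAbs + 1) * (s - Δ i) - ω ^ (i.natAbs + 1) * (t - Δ i)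
        = ω ^ (i.natAbs + 1) * (s - t) := by ring
    rw [he, abs_mul, abs_of_nonneg (omega_pow_pos (i.natAbs+1)).le]
    nlinarith [abs_nonneg (s - t), omega_pow_ge i.natAbs]

/-- range -/
lemma fval_range (i : ℤ) (s : ℝ) (hs : s ∈ Iint i) :
    0 ≤ fval i s ∧ fval i s < Real.sqrt 2 := by
  have hω : ω - 1 = Real.sqrt 2 := by unfold ω; ring
  unfold Iint at hs
  unfold fval
  split_ifs with h1 h2
  · simp only [if_pos h1] at hs
    obtain ⟨hl, hr⟩ := hs
    have hD : Δ i = β ^ i.natAbs := by unfold Δ; rw [if_pos h1]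
    have hD' : Δ (i - 1) = β ^ (i.natAbs + 1) := by
      unfold Δ
      rw [if_pos (by omega : i - 1 < 0)]
      congr 1
      omega
    rw [hD] at hr ⊢
    rw [hD'] at hl
    have hpow := omega_pow_pos (i.natAbs + 1)
    refine ⟨by nlinarith, ?_⟩
    nlinarith [omega_pow_beta i.natAbs, omega_pow_beta' (i.natAbs + 1),
      mul_lt_mul_of_pos_left hl hpow]
  · rw [if_neg h1, if_pos h2] at hs
    obtain ⟨hl, hr⟩ := hs
    refine ⟨by nlinarith [omega_pos], ?_⟩
    nlinarith [omega_pos, beta_omega]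
  · rw [if_neg h1, if_neg h2] at hs
    have hi : 0 < i := by omega
    have hD : Δ i = Real.sqrt 2 - β ^ i.natAbs := by
      unfold Δ; rw [if_neg h1, if_neg h2]
    have hD' : Δ (i + 1) = Real.sqrt 2 - β ^ (i.natAbs + 1) := by
      unfold Δ
      rw [if_neg (by omega : ¬ i + 1 < 0), if_neg (by omega : ¬ i + 1 = 0)]
      congr 2
      omega
    rw [hD, hD'] at hs
    obtain ⟨hl, hr⟩ := hs
    rw [hD]
    have hpow := omega_pow_pos (i.natAbs + 1)
    refine ⟨by nlinarith, ?_⟩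
    nlinarith [omega_pow_beta i.natAbs, omega_pow_beta' (i.natAbs + 1),
      mul_lt_mul_of_pos_left (by linarith : s - (Real.sqrt 2 - β ^ i.natAbs)
        < β ^ i.natAbs - β ^ (i.natAbs + 1)) hpow]

/-- existence of a small power window -/
lemma exists_window (x : ℝ) (hx : 0 < x) (hxb : x ≤ β) :
    ∃ m : ℕ, 1 ≤ m ∧ β ^ (m + 1) < x ∧ x ≤ β ^ m := by
  obtain ⟨n, hn⟩ := exists_pow_lt_of_lt_one hx beta_lt_one
  have hfind := Nat.find_spec (⟨n, hn⟩ : ∃ n, β ^ n < x)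
  set N := Nat.find (⟨n, hn⟩ : ∃ n, β ^ n < x) with hN
  have hNpos : N ≠ 0 := by
    intro h0
    rw [h0] at hfind
    rw [pow_zero] at hfind
    linarith [beta_lt_one]
  obtain ⟨m, hm⟩ : ∃ m, N = m + 1 := ⟨N - 1, by omega⟩
  have hmin : ¬ β ^ m < x := Nat.find_min _ (show m < N by omega)
  push_neg at hmin
  have hm1 : 1 ≤ m := by
    rcases Nat.eq_zero_or_pos m with h | h
    · exfalso
      rw [hm, h] at hfind
      rw [zero_add, pow_one] at hfind
      linarith
    · exact h
  exact ⟨m, hm1, by rw [hm] at hfind; exact hfind, hmin⟩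

/-- every point of (0,√2) is in some interval -/
lemma exists_Iint (x : ℝ) (hx0 : 0 < x) (hx2 : x < Real.sqrt 2) : ∃ i, x ∈ Iint i := by
  rcases le_or_gt x β with hb | hb
  · obtain ⟨m, hm1, hw1, hw2⟩ := exists_window x hx0 hb
    refine ⟨-(m:ℤ), ?_⟩
    have hneg : -(m:ℤ) < 0 := by omega
    unfold Iint
    rw [if_pos hneg]
    constructor
    · have : Δ (-(m:ℤ) - 1) = β ^ (m + 1) := by
        unfold Δ
        rw [if_pos (by omega : -(m:ℤ) - 1 < 0)]
        congr 1
        omega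
      rw [this]; exact hw1
    · have : Δ (-(m:ℤ)) = β ^ m := by
        unfold Δ
        rw [if_pos hneg]
        congr 1
        omega
      rw [this]; exact hw2
  · rcases lt_or_ge x 1 with h1 | h1
    · exact ⟨0, by unfold Iint; rw [if_neg (by omega), if_pos rfl]; exact ⟨hb, h1⟩⟩
    · set y := Real.sqrt 2 - x with hy
      have hy0 : 0 < y := by simp [hy]; linarith
      have hyb : y ≤ β := by unfold β; simp [hy]; linarith
      obtain ⟨m, hm1, hw1, hw2⟩ := exists_window y hy0 hyb
      refine ⟨(m:ℤ), ?_⟩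
      have hpos : ¬ ((m:ℤ) < 0) := by omega
      have hne : ¬ ((m:ℤ) = 0) := by omega
      unfold Iint
      rw [if_neg hpos, if_neg hne]
      constructor
      · have hna : ((m:ℤ)).natAbs = m := by omega
        have : Δ (m:ℤ) = Real.sqrt 2 - β ^ m := by
          unfold Δ
          rw [if_neg hpos, if_neg hne, hna]
        rw [this]; linarith
      · have hna : ((m:ℤ) + 1).natAbs = m + 1 := by omega
        have : Δ ((m:ℤ) + 1) = Real.sqrt 2 - β ^ (m + 1) := by
          unfold Δ
          rw [if_neg (by omega : ¬ (m:ℤ) + 1 < 0), if_neg (by omega : ¬ (m:ℤ) + 1 = 0), hna]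
        rw [this]; linarith

/-- the itinerary determines the point: if `s, t ∈ (0,√2)` have
never-vanishing orbits and, for every `k`, the iterates `f^[k] s` and
`f^[k] t` belong to the same interval `I_i`, then `s = t`. -/
theorem luroth_itinerary_determines_point (f : ℝ → ℝ) (hf : IsLuroth f) :
    ∀ s ∈ Set.Ioo (0 : ℝ) (Real.sqrt 2), ∀ t ∈ Set.Ioo (0 : ℝ) (Real.sqrt 2),
      (∀ k : ℕ, f^[k] s ≠ 0) → (∀ k : ℕ, f^[k] t ≠ 0) →
      (∀ k : ℕ, ∀ i : ℤ, f^[k] s ∈ Iint i ↔ f^[k] t ∈ Iint i) →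
      s = t := by
  intro s hs t ht hns hnt hit
  have key : ∀ k : ℕ, f^[k] s ∈ Set.Ioo (0:ℝ) (Real.sqrt 2) ∧
      f^[k] t ∈ Set.Ioo (0:ℝ) (Real.sqrt 2) ∧
      2 ^ k * |s - t| ≤ |f^[k] s - f^[k] t| := by
    intro k
    induction k with
    | zero => simpa using ⟨hs, ht⟩
    | succ k ih =>
      obtain ⟨⟨hu0, hu2⟩, ⟨hv0, hv2⟩, hd⟩ := ih
      obtain ⟨i, hui⟩ := exists_Iint _ hu0 hu2
      have hvi : f^[k] t ∈ Iint i := (hit k i).mp hui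
      have hfs : f^[k+1] s = fval i (f^[k] s) := by
        rw [Function.iterate_succ_apply', hf.2.2 i _ hui]
      have hft : f^[k+1] t = fval i (f^[k] t) := by
        rw [Function.iterate_succ_apply', hf.2.2 i _ hvi]
      have hrs := fval_range i _ hui
      have hrt := fval_range i _ hvi
      refine ⟨⟨?_, by rw [hfs]; exact hrs.2⟩, ⟨?_, by rw [hft]; exact hrt.2⟩, ?_⟩
      · exact lt_of_le_of_ne (hfs ▸ hrs.1) (Ne.symm (hns (k+1)))
      · exact lt_of_le_of_ne (hft ▸ hrt.1) (Ne.symm (hnt (k+1)))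
      · rw [hfs, hft]
        calc 2 ^ (k+1) * |s - t| = 2 * (2 ^ k * |s - t|) := by ring
        _ ≤ 2 * |f^[k] s - f^[k] t| := by linarith
        _ ≤ _ := fval_expand i _ _
  by_contra hne
  have hd : 0 < |s - t| := abs_pos.mpr (sub_ne_zero.mpr hne)
  obtain ⟨k, hk⟩ := pow_unbounded_of_one_lt (Real.sqrt 2 / |s - t|) (one_lt_two (α := ℝ))
  obtain ⟨⟨hu0, hu2⟩, ⟨hv0, hv2⟩, hdk⟩ := key k
  have hlt : |f^[k] s - f^[k] t| < Real.sqrt 2 := by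
    rw [abs_sub_lt_iff]; constructor <;> linarith
  have : Real.sqrt 2 < 2 ^ k * |s - t| := by
    rw [div_lt_iff₀ hd] at hk; linarith
  linarith
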